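/- Let P ⊂ ℝ^d be an integer polytope (all vertices in ℤ^d) that is centrally symmetric and has centrally symmetric facets. Then any two opposite facets of P are translates of each other by an integer vector. -/

import Mathlib

open scoped Pointwise RealInnerProductSpace
open MeasureTheory Filter
open scoped ENNReal

noncomputable section

abbrev Euc (d : ℕ) := EuclideanSpace ℝ (Fin d)

def IsDiscreteFam {d : ℕ} {ι : Type*} (Λ : ι → Euc d) : Prop :=
  ∀ (x : Euc d) (r : ℝ), {i | Λ i ∈ Metric.closedBall x r}.Finite

def IsConvexPolytope {d : ℕ} (P : Set (Euc d)) : Prop :=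
  ∃ V : Finset (Euc d), V.Nonempty ∧ P = convexHull ℝ (V : Set (Euc d))

def CentSymm {d : ℕ} (P : Set (Euc d)) : Prop :=
  ∃ w : Euc d, P = (fun p => w - p) '' P

def kTiles {d : ℕ} {ι : Type*} (P : Set (Euc d)) (Λ : ι → Euc d) (k : ℕ) : Prop :=
  ∀ v : Euc d, (∀ i, v - Λ i ∉ frontier P) → Nat.card {i : ι // v - Λ i ∈ P} = k

def faceIn {d : ℕ} (P : Set (Euc d)) (n : Euc d) : Set (Euc d) :=
  {x | x ∈ P ∧ ∀ y ∈ P, (inner ℝ n y : ℝ) ≤ inner ℝ n x}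

def IsFacet {d : ℕ} (P F : Set (Euc d)) : Prop :=
  ∃ n : Euc d, n ≠ 0 ∧ F = faceIn P n ∧
    Module.finrank ℝ ↥(vectorSpan ℝ F) = d - 1

def intVec {d : ℕ} (m : Fin d → ℤ) : Euc d := WithLp.toLp 2 (fun i => (m i : ℝ))

def solidAngle {d : ℕ} (Q : Set (Euc d)) (x : Euc d) : ℝ :=
  limUnder (nhdsWithin (0:ℝ) (Set.Ioi 0)) fun R =>
    (volume (Metric.ball x R ∩ Q)).toReal / (volume (Metric.ball x R)).toReal

/-- auxiliary: translation preserves extreme points -/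
lemma extremePoints_translate {E : Type*} [AddCommGroup E] [Module ℝ E] {s : Set E} {x t : E}
    (h : x ∈ s.extremePoints ℝ) : x + t ∈ ((fun p => p + t) '' s).extremePoints ℝ := by
  refine ⟨⟨x, h.1, rfl⟩, ?_⟩
  rintro _ ⟨a, ha, rfl⟩ _ ⟨b, hb, rfl⟩ ⟨u, v, hu, hv, huv, heq⟩
  have heq' : u • a + v • b + (u • t + v • t) = x + t := by
    rw [smul_add, smul_add] at heq
    rw [← heq]; abel
  rw [← add_smul, huv, one_smul] at heq'
  have key : u • a + v • b = x := add_right_cancel heq'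
  have h1 := h.2 ha hb ⟨u, v, hu, hv, huv, key⟩
  rw [h1]

/-- auxiliary: faces are exposed -/
lemma faceIn_isExposed {d : ℕ} (P : Set (Euc d)) (n : Euc d) :
    IsExposed ℝ P (faceIn P n) := fun _ => ⟨innerSL ℝ n, by
  ext x; simp [faceIn, innerSL_apply_apply]⟩

/-- for an integer polytope which is centrally symmetric with centrally
symmetric facets, opposite facets are integer translates of one another. -/
theorem stmt5 {d : ℕ} (P : Set (Euc d)) (V : Finset (Euc d)) (hV : V.Nonempty)
    (hPV : P = convexHull ℝ (V : Set (Euc d)))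
    (hintvert : ∀ x ∈ V, ∀ i : Fin d, ∃ m : ℤ, x i = (m : ℝ))
    (hsym : CentSymm P) (hfacets : ∀ F, IsFacet P F → CentSymm F)
    (n : Euc d) (F₁ F₂ : Set (Euc d))
    (hF₁ : F₁ = faceIn P n) (hF₂ : F₂ = faceIn P (-n))
    (h₁ : IsFacet P F₁) (h₂ : IsFacet P F₂) :
    ∃ z : Fin d → ℤ, F₂ = (fun p => p + intVec z) '' F₁ := by
  obtain ⟨w, hw⟩ := hsym
  obtain ⟨w₁, hw₁⟩ := hfacets F₁ h₁
  -- membership characterization of the central symmetry of P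
  have hwP : ∀ x : Euc d, x ∈ P ↔ w - x ∈ P := by
    intro x
    constructor
    · intro hx
      rw [hw] at hx
      obtain ⟨p, hp, rfl⟩ := hx
      simpa [sub_sub_cancel] using hp
    · intro hx
      rw [hw]
      exact ⟨w - x, hx, by simp [sub_sub_cancel]⟩
  -- F₂ is the point reflection of F₁
  have hF₂F₁ : F₂ = (fun p => w - p) '' F₁ := by
    have himg : (fun p => w - p) '' F₁ = {x | w - x ∈ F₁} := by
      ext x
      constructor
      · rintro ⟨a, ha, rfl⟩
        simpa [sub_sub_cancel] using ha
      · intro hx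
        exact ⟨w - x, hx, by simp [sub_sub_cancel]⟩
    rw [himg, hF₁, hF₂]
    ext x
    simp only [faceIn, Set.mem_setOf_eq]
    constructor
    · rintro ⟨hxP, hmax⟩
      refine ⟨(hwP x).1 hxP, ?_⟩
      intro y hy
      have hy' : w - y ∈ P := (hwP y).1 hy
      have := hmax (w - y) hy'
      rw [inner_neg_left, inner_neg_left, inner_sub_right] at this
      rw [inner_sub_right]
      linarith
    · rintro ⟨hxP, hmax⟩
      refine ⟨(hwP x).2 (by simpa using hxP), ?_⟩
      intro y hy
      have hy' : w - y ∈ P := (hwP y).1 hy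
      have := hmax (w - y) hy'
      rw [inner_sub_right, inner_sub_right] at this
      rw [inner_neg_left, inner_neg_left]
      linarith
  -- hence F₂ is a translate of F₁
  set t : Euc d := w - w₁ with ht
  have hF₂t : F₂ = (fun p => p + t) '' F₁ := by
    rw [hF₂F₁]
    conv_lhs => rw [hw₁]
    rw [Set.image_image]
    apply Set.image_congr
    intro a _
    simp only [ht]
    abel
  -- compactness and convexity facts
  have hPcomp : IsCompact P := by
    rw [hPV]; exact V.finite_toSet.isCompact_convexHull ℝ
  have hPne : P.Nonempty := by
    rw [hPV]
    exact hV.to_set.mono (subset_convexHull ℝ _)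
  -- F₁ is a nonempty compact set
  have hF₁exp : IsExposed ℝ P F₁ := hF₁ ▸ faceIn_isExposed P n
  have hF₂exp : IsExposed ℝ P F₂ := hF₂ ▸ faceIn_isExposed P (-n)
  have hF₁comp : IsCompact F₁ := hF₁exp.isCompact hPcomp
  have hF₁ne : F₁.Nonempty := by
    obtain ⟨x, hx, hmax⟩ := hPcomp.exists_isMaxOn hPne
      ((continuous_const.inner continuous_id).continuousOn :
        ContinuousOn (fun y : Euc d => (inner ℝ n y : ℝ)) P)
    exact ⟨x, by rw [hF₁]; exact ⟨hx, fun y hy => hmax hy⟩⟩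
  -- get an extreme point of F₁
  obtain ⟨v, hv⟩ := hF₁comp.extremePoints_nonempty hF₁ne
  -- extreme points of exposed faces lie in V
  have hsubV : ∀ F : Set (Euc d), IsExposed ℝ P F → F.extremePoints ℝ ⊆ (V : Set (Euc d)) := by
    intro F hF x hx
    have h1 : x ∈ P.extremePoints ℝ :=
      hF.isExtreme.extremePoints_subset_extremePoints hx
    rw [hPV] at h1
    exact extremePoints_convexHull_subset h1
  have hvV : v ∈ V := hsubV F₁ hF₁exp hv
  have hvtV : v + t ∈ V := by
    have : v + t ∈ F₂.extremePoints ℝ := by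
      rw [hF₂t]
      exact extremePoints_translate hv
    exact hsubV F₂ hF₂exp this
  -- extract integer coordinates
  choose m₁ hm₁ using hintvert v hvV
  choose m₂ hm₂ using hintvert (v + t) hvtV
  refine ⟨fun i => m₂ i - m₁ i, ?_⟩
  have htz : intVec (fun i => m₂ i - m₁ i) = t := by
    apply PiLp.ext; intro i
    have : (v + t) i = v i + t i := rfl
    have h2 := hm₂ i
    rw [this] at h2
    simp only [intVec, PiLp.toLp_apply, Int.cast_sub]
    rw [← h2, hm₁ i]
    ring
  rw [htz]
  exact hF₂t
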